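/- Let n ≥ 3 be odd. For 0 ≤ k < n define δ_k = {(k+2i) mod n : 0 ≤ i ≤ ⌊n/2⌋} ⊆ {0,…,n−1}, and let x^{δ_k} ∈ ℝ^n be the incidence vector. Then the n vectors x^{δ_0},…,x^{δ_{n−1}} are affinely independent, each has exactly ⌈n/2⌉ ones, and each δ_k contains two cyclically consecutive indices. -/

import Mathlib

private theorem my_val_add_one (n : ℕ) [NeZero n] (hn : 3 ≤ n) (a : Fin n) :
    (a + 1).val = if a.val = n - 1 then 0 else a.val + 1 := by
  have h1 : ((1 : Fin n) : ℕ) = 1 := by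
    rw [Fin.val_one']; exact Nat.mod_eq_of_lt (by omega)
  rw [Fin.add_def, h1]
  have := a.isLt
  split <;> rename_i h
  · have hn' : a.val + 1 = n := by omega
    show (a.val + 1) % n = 0
    simp [hn']
  · exact Nat.mod_eq_of_lt (by omega)

private theorem my_val_neg_one (n : ℕ) [NeZero n] (hn : 3 ≤ n) :
    ((-1 : Fin n)).val = n - 1 := by
  by_contra h
  have h2 := my_val_add_one n hn (-1)
  rw [neg_add_cancel, if_neg h] at h2
  simp at h2

/-- For odd `n ≥ 3` and `0 ≤ k < n`, let `δ_k = {(k+2i) mod n : 0 ≤ i ≤ ⌊n/2⌋}`.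
Then the `n` incidence vectors `x^{δ_0}, …, x^{δ_{n-1}}` are affinely
independent, each `δ_k` has exactly `⌈n/2⌉` elements, and each `δ_k` contains
two cyclically consecutive indices. -/
theorem circular_star_multicuts_affine_independent (n : ℕ) [NeZero n]
    (hn : 3 ≤ n) (hodd : Odd n)
    (D : Fin n → Set (Fin n))
    (hD : ∀ k : Fin n, D k = {m : Fin n | ∃ i : ℕ, i ≤ n / 2 ∧ m = k + (Fin.ofNat n (2 * i : ℕ))}) :
    AffineIndependent ℝ
      (fun k : Fin n => fun j : Fin n => Set.indicator (D k) (fun _ => (1 : ℝ)) j) ∧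
    (∀ k : Fin n, (D k).ncard = (n + 1) / 2) ∧
    (∀ k : Fin n, ∃ j : Fin n, j ∈ D k ∧ j + 1 ∈ D k) := by
  classical
  have hn1 : n % 2 = 1 := Nat.odd_iff.mp hodd
  -- membership characterization
  have hmem : ∀ k m : Fin n, m ∈ D k ↔ Even ((m - k).val) := by
    intro k m
    rw [hD]
    simp only [Set.mem_setOf_eq]
    constructor
    · rintro ⟨i, hi, rfl⟩
      have h2i : 2 * i < n := by omega
      have hsub : (k + (Fin.ofNat n (2 * i : ℕ)) - k) = (Fin.ofNat n (2 * i : ℕ)) := by abel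
      rw [hsub, Fin.val_ofNat, Nat.mod_eq_of_lt h2i]
      exact even_two_mul i
    · intro hv
      have hvlt : (m - k).val < n := (m - k).isLt
      have hv2 : (m - k).val % 2 = 0 := Nat.even_iff.mp hv
      refine ⟨(m - k).val / 2, by omega, ?_⟩
      have h2 : 2 * ((m - k).val / 2) = (m - k).val := by omega
      rw [h2, Fin.ofNat_val_eq_self]
      abel
  -- cardinality
  have hcard : ∀ k : Fin n, (D k).ncard = (n + 1) / 2 := by
    intro k
    have hset : D k = ↑(Finset.univ.filter (fun m : Fin n => Even ((m - k).val))) := by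
      ext m; simp [hmem k m]
    rw [hset, Set.ncard_coe_finset]
    have hb : (Finset.univ.filter (fun m : Fin n => Even ((m - k).val))).card
        = (Finset.univ.filter (fun v : Fin n => Even v.val)).card := by
      apply Finset.card_bij (fun m _ => m - k)
      · intro m hm
        simp only [Finset.mem_filter, Finset.mem_univ, true_and] at hm ⊢
        exact hm
      · intro m1 _ m2 _ h
        exact sub_left_injective h
      · intro v hv
        simp only [Finset.mem_filter, Finset.mem_univ, true_and] at hv
        refine ⟨v + k, ?_, by abel⟩
        simp only [Finset.mem_filter, Finset.mem_univ, true_and]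
        simpa using hv
    rw [hb]
    have hc2 : (Finset.univ.filter (fun v : Fin n => Even v.val)).card
        = ((Finset.range n).filter (fun v => Even v)).card := by
      apply Finset.card_bij (fun v _ => v.val)
      · intro v hv
        simp only [Finset.mem_filter, Finset.mem_univ, true_and] at hv
        simp only [Finset.mem_filter, Finset.mem_range]
        exact ⟨v.isLt, hv⟩
      · intro a _ b _ h
        exact Fin.ext h
      · intro x hx
        simp only [Finset.mem_filter, Finset.mem_range] at hx
        refine ⟨⟨x, hx.1⟩, ?_, rfl⟩
        simp only [Finset.mem_filter, Finset.mem_univ, true_and]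
        exact hx.2
    rw [hc2]
    have hr : (Finset.range n).filter (fun v => Even v)
        = (Finset.range ((n + 1) / 2)).image (fun i => 2 * i) := by
      ext x
      simp only [Finset.mem_filter, Finset.mem_range, Finset.mem_image, Nat.even_iff]
      constructor
      · rintro ⟨hx, he⟩
        exact ⟨x / 2, by omega, by omega⟩
      · rintro ⟨i, hi, rfl⟩
        omega
    rw [hr, Finset.card_image_of_injective _ (fun a b h => by omega), Finset.card_range]
  -- consecutive pair
  have hcons : ∀ k : Fin n, ∃ j : Fin n, j ∈ D k ∧ j + 1 ∈ D k := by
    intro k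
    refine ⟨k - 1, ?_, ?_⟩
    · rw [hmem]
      have hh : k - 1 - k = -1 := by abel
      rw [hh, my_val_neg_one n hn, Nat.even_iff]
      omega
    · rw [hmem]
      have hh : k - 1 + 1 - k = 0 := by abel
      rw [hh]
      simp
  refine ⟨?_, hcard, hcons⟩
  rw [affineIndependent_iff_of_fintype]
  intro w hw hws
  -- coordinate equations
  have hcoord : ∀ j : Fin n,
      ∑ k ∈ Finset.univ.filter (fun k : Fin n => Even ((j - k).val)), w k = 0 := by
    intro j
    rw [Finset.weightedVSub_eq_weightedVSubOfPoint_of_sum_eq_zero _ w _ hw 0,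
      Finset.weightedVSubOfPoint_apply] at hws
    have hj := congrFun hws j
    simp only [Finset.sum_apply, Pi.smul_apply, Pi.zero_apply, vsub_eq_sub, Pi.sub_apply,
      sub_zero, smul_eq_mul] at hj
    have hterm : ∀ k : Fin n, w k * Set.indicator (D k) (fun _ => (1 : ℝ)) j
        = if Even ((j - k).val) then w k else 0 := by
      intro k
      by_cases h : Even ((j - k).val)
      · rw [if_pos h, Set.indicator_of_mem ((hmem k j).mpr h), mul_one]
      · rw [if_neg h, Set.indicator_of_notMem (fun hc => h ((hmem k j).mp hc)), mul_zero]
    calc ∑ k ∈ Finset.univ.filter (fun k : Fin n => Even ((j - k).val)), w k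
        = ∑ k : Fin n, if Even ((j - k).val) then w k else 0 := (Finset.sum_filter _ _)
      _ = ∑ k : Fin n, w k * Set.indicator (D k) (fun _ => (1 : ℝ)) j :=
          Finset.sum_congr rfl (fun k _ => (hterm k).symm)
      _ = 0 := hj
  -- key step
  have key : ∀ j : Fin n, w (j + 1) = 0 := by
    intro j
    set A := Finset.univ.filter (fun k : Fin n => Even ((j - k).val)) with hA
    set B := Finset.univ.filter (fun k : Fin n => Even ((j + 1 - k).val)) with hB
    have hU : A ∪ B = Finset.univ := by
      ext k
      simp only [hA, hB, Finset.mem_union, Finset.mem_filter, Finset.mem_univ, true_and,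
        iff_true]
      have hrel : j + 1 - k = (j - k) + 1 := by abel
      rw [hrel, my_val_add_one n hn (j - k)]
      by_cases h : (j - k).val = n - 1
      · exact Or.inl (by rw [h, Nat.even_iff]; omega)
      · rw [if_neg h]
        rcases Nat.even_or_odd ((j - k).val) with he | ho
        · exact Or.inl he
        · exact Or.inr ho.add_one
    have hI : A ∩ B = {j + 1} := by
      ext k
      simp only [hA, hB, Finset.mem_inter, Finset.mem_filter, Finset.mem_univ, true_and,
        Finset.mem_singleton]
      have hrel : j + 1 - k = (j - k) + 1 := by abel
      rw [hrel, my_val_add_one n hn (j - k)]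
      constructor
      · rintro ⟨h1, h2⟩
        by_cases h : (j - k).val = n - 1
        · have hval : j - k = -1 := Fin.ext (by rw [h, my_val_neg_one n hn])
          have hj : j = -1 + k := sub_eq_iff_eq_add.mp hval
          rw [hj]; abel
        · rw [if_neg h] at h2
          exact absurd h2 (by simpa [Nat.even_add_one] using h1)
      · rintro rfl
        have hval : j - (j + 1) = -1 := by abel
        rw [hval, my_val_neg_one n hn]
        constructor
        · rw [Nat.even_iff]; omega
        · rw [if_pos rfl]; exact Even.zero
    have hsum := Finset.sum_union_inter (s₁ := A) (s₂ := B) (f := w)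
    rw [hU, hI, Finset.sum_singleton] at hsum
    rw [hcoord j] at hsum
    have hBj : ∑ k ∈ B, w k = 0 := hcoord (j + 1)
    rw [hBj, hw] at hsum
    linarith
  intro i
  have hi : i = (i - 1) + 1 := by abel
  rw [hi]
  exact key (i - 1)
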